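/- Let ω > 0 be a real number. A pair (s₀, τ) ∈ ℝ × (0, +∞) belongs to the admissibility region of the oscillator, i.e., there exists a real number b₀ such that s₀ is a root of multiplicity at least 2 of Δ(s) = s² + ω² + b₀ e^{−sτ}, if and only if 2 s₀ + τ (s₀² + ω²) = 0. Consequently, for every s₀ < 0 there is exactly one admissible delay, namely τ = −2 s₀ / (s₀² + ω²), and no pair (s₀, τ) with s₀ ≥ 0 is admissible. -/

import Mathlib

lemma osc_deriv (ω b₀ τ : ℝ) (z : ℂ) :
    deriv (fun s : ℂ => s ^ 2 + (ω : ℂ) ^ 2 + (b₀ : ℂ) * Complex.exp (-s * τ)) z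
      = 2 * z - (b₀ : ℂ) * τ * Complex.exp (-z * τ) := by
  have h : HasDerivAt (fun s : ℂ => s ^ 2 + (ω : ℂ) ^ 2 + (b₀ : ℂ) * Complex.exp (-s * τ))
      (2 * z - (b₀ : ℂ) * τ * Complex.exp (-z * τ)) z := by
    have h1 : HasDerivAt (fun s : ℂ => s ^ 2) (2 * z) z := by
      simpa using (hasDerivAt_pow 2 z)
    have h2 : HasDerivAt (fun s : ℂ => -s * τ) (-τ) z := by
      have := ((hasDerivAt_id z).neg).mul_const (τ : ℂ)
      simpa using this
    have h3 : HasDerivAt (fun s : ℂ => Complex.exp (-s * τ)) (Complex.exp (-z * τ) * (-τ)) z :=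
      (Complex.hasDerivAt_exp (-z * τ)).comp z h2
    have h4 := (h1.add_const ((ω : ℂ) ^ 2)).add (h3.const_mul (b₀ : ℂ))
    exact h4.congr_deriv (by ring)
  exact h.deriv

lemma osc_key (ω : ℝ) (s₀ τ : ℝ) (hτ : 0 < τ) :
    (∃ b₀ : ℝ,
        (fun s : ℂ => s ^ 2 + (ω : ℂ) ^ 2 + (b₀ : ℂ) * Complex.exp (-s * τ)) (s₀ : ℂ) = 0 ∧
        deriv (fun s : ℂ => s ^ 2 + (ω : ℂ) ^ 2 + (b₀ : ℂ) * Complex.exp (-s * τ)) (s₀ : ℂ) = 0) ↔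
      2 * s₀ + τ * (s₀ ^ 2 + ω ^ 2) = 0 := by
  constructor
  · rintro ⟨b₀, h1, h2⟩
    rw [osc_deriv] at h2
    simp only at h1
    have hE : Complex.exp (-(s₀:ℂ) * τ) = ((Real.exp (-s₀ * τ) : ℝ) : ℂ) := by
      rw [Complex.ofReal_exp]; push_cast; ring_nf
    rw [hE] at h1 h2
    have h1' : s₀ ^ 2 + ω ^ 2 + b₀ * Real.exp (-s₀ * τ) = 0 := by exact_mod_cast h1
    have h2' : 2 * s₀ - b₀ * τ * Real.exp (-s₀ * τ) = 0 := by exact_mod_cast h2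
    nlinarith [h1', h2']
  · intro h
    refine ⟨-(s₀ ^ 2 + ω ^ 2) * Real.exp (s₀ * τ), ?_, ?_⟩
    · simp only
      have hE : Complex.exp (-(s₀:ℂ) * τ) = ((Real.exp (-(s₀ * τ)) : ℝ) : ℂ) := by
        rw [Complex.ofReal_exp]; push_cast; ring_nf
      rw [hE]
      have he : Real.exp (s₀ * τ) * Real.exp (-(s₀ * τ)) = 1 := by
        rw [← Real.exp_add]; simp
      have key : s₀ ^ 2 + ω ^ 2 + (-(s₀ ^ 2 + ω ^ 2) * Real.exp (s₀ * τ)) * Real.exp (-(s₀ * τ)) = 0 := by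
        have : s₀ ^ 2 + ω ^ 2 + (-(s₀ ^ 2 + ω ^ 2) * Real.exp (s₀ * τ)) * Real.exp (-(s₀ * τ))
            = (s₀ ^ 2 + ω ^ 2) * (1 - Real.exp (s₀ * τ) * Real.exp (-(s₀ * τ))) := by ring
        rw [this, he]; ring
      exact_mod_cast congrArg (Complex.ofReal) key
    · rw [osc_deriv]
      have hE : Complex.exp (-(s₀:ℂ) * τ) = ((Real.exp (-(s₀ * τ)) : ℝ) : ℂ) := by
        rw [Complex.ofReal_exp]; push_cast; ring_nf
      rw [hE]
      have he : Real.exp (s₀ * τ) * Real.exp (-(s₀ * τ)) = 1 := by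
        rw [← Real.exp_add]; simp
      have : (2 : ℝ) * s₀ - (-(s₀ ^ 2 + ω ^ 2) * Real.exp (s₀ * τ)) * τ * Real.exp (-(s₀ * τ)) = 0 := by
        have expand : (2 : ℝ) * s₀ - (-(s₀ ^ 2 + ω ^ 2) * Real.exp (s₀ * τ)) * τ * Real.exp (-(s₀ * τ))
            = 2 * s₀ + τ * (s₀ ^ 2 + ω ^ 2) * (Real.exp (s₀ * τ) * Real.exp (-(s₀ * τ))) := by ring
        rw [expand, he]; linarith
      push_cast
      exact_mod_cast congrArg (Complex.ofReal) this

theorem oscillator_admissibility_region (ω : ℝ) (hω : 0 < ω) :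
    (∀ s₀ τ : ℝ, 0 < τ →
      ((∃ b₀ : ℝ,
          (fun s : ℂ => s ^ 2 + (ω : ℂ) ^ 2 + (b₀ : ℂ) * Complex.exp (-s * τ)) (s₀ : ℂ) = 0 ∧
          deriv (fun s : ℂ => s ^ 2 + (ω : ℂ) ^ 2 + (b₀ : ℂ) * Complex.exp (-s * τ)) (s₀ : ℂ) = 0) ↔
        2 * s₀ + τ * (s₀ ^ 2 + ω ^ 2) = 0)) ∧
    (∀ s₀ : ℝ, s₀ < 0 → ∀ τ : ℝ, 0 < τ →
      ((∃ b₀ : ℝ,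
          (fun s : ℂ => s ^ 2 + (ω : ℂ) ^ 2 + (b₀ : ℂ) * Complex.exp (-s * τ)) (s₀ : ℂ) = 0 ∧
          deriv (fun s : ℂ => s ^ 2 + (ω : ℂ) ^ 2 + (b₀ : ℂ) * Complex.exp (-s * τ)) (s₀ : ℂ) = 0) ↔
        τ = -2 * s₀ / (s₀ ^ 2 + ω ^ 2))) ∧
    (∀ s₀ : ℝ, 0 ≤ s₀ → ∀ τ : ℝ, 0 < τ →
      ¬ ∃ b₀ : ℝ,
          (fun s : ℂ => s ^ 2 + (ω : ℂ) ^ 2 + (b₀ : ℂ) * Complex.exp (-s * τ)) (s₀ : ℂ) = 0 ∧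
          deriv (fun s : ℂ => s ^ 2 + (ω : ℂ) ^ 2 + (b₀ : ℂ) * Complex.exp (-s * τ)) (s₀ : ℂ) = 0) := by
  have hpos : ∀ s₀ : ℝ, 0 < s₀ ^ 2 + ω ^ 2 := fun s₀ => by positivity
  refine ⟨fun s₀ τ hτ => osc_key ω s₀ τ hτ, ?_, ?_⟩
  · intro s₀ hs₀ τ hτ
    rw [osc_key ω s₀ τ hτ]
    have h := hpos s₀
    rw [eq_div_iff (ne_of_gt h)]
    constructor <;> intro hh <;> linarith
  · intro s₀ hs₀ τ hτ h
    rw [osc_key ω s₀ τ hτ] at h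
    nlinarith [hpos s₀, mul_pos hτ (hpos s₀)]
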